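/- arXiv:math/0411617 — 3 statements merged into one kernel-verified Lean document; each statement's English description precedes it below -/
import Mathlib

section
/- The function K(p) = [4π(p+3)^2/(p sin(2π/p))]^{1/p} is decreasing on [4, ∞); in particular, for all p ≥ 4, K(p) ≤ K(4) = (49π)^{1/4}. -/
open Real

noncomputable def Lfun (p : ℝ) : ℝ :=
  Real.log (4 * Real.pi) + 2 * Real.log (p + 3) - Real.log p
    - Real.log (Real.sin (2 * Real.pi / p))

noncomputable def Kfun (p : ℝ) : ℝ := Lfun p / p

lemma cos_mul_le_sin {y : ℝ} (h0 : 0 < y) (h2 : y ≤ Real.pi / 2) :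
    Real.cos y * y ≤ Real.sin y := by
  rcases lt_or_eq_of_le h2 with h | h
  · have hc : 0 < Real.cos y := Real.cos_pos_of_mem_Ioo ⟨by linarith [Real.pi_pos], h⟩
    have ht : y < Real.tan y := Real.lt_tan h0 h
    rw [Real.tan_eq_sin_div_cos, lt_div_iff₀ hc] at ht
    nlinarith
  · rw [h]; simp [Real.cos_pi_div_two, Real.sin_pi_div_two]

section facts
variable {p : ℝ} (hp : 4 ≤ p)
include hp

lemma hp0 : 0 < p := by linarith

lemma hy0 : 0 < 2 * Real.pi / p := div_pos (by positivity) (hp0 hp)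

lemma hy2 : 2 * Real.pi / p ≤ Real.pi / 2 := by
  rw [div_le_iff₀ (hp0 hp)]
  nlinarith [Real.pi_pos]

lemma hsin : 0 < Real.sin (2 * Real.pi / p) :=
  Real.sin_pos_of_pos_of_lt_pi (hy0 hp) (lt_of_le_of_lt (hy2 hp) (by linarith [Real.pi_pos]))

lemma hApos : 0 < 4 * Real.pi * (p + 3) ^ 2 / (p * Real.sin (2 * Real.pi / p)) := by
  have := hsin hp
  have := hp0 hp
  have := Real.pi_pos
  positivity

lemma hA98 : 98 ≤ 4 * Real.pi * (p + 3) ^ 2 / (p * Real.sin (2 * Real.pi / p)) := by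
  have hs := hsin hp
  have hp' := hp0 hp
  have hπ := Real.pi_pos
  rw [le_div_iff₀ (mul_pos hp' hs)]
  have hsy : Real.sin (2 * Real.pi / p) < 2 * Real.pi / p := Real.sin_lt (hy0 hp)
  have hps : p * Real.sin (2 * Real.pi / p) ≤ 2 * Real.pi := by
    calc p * Real.sin (2 * Real.pi / p) ≤ p * (2 * Real.pi / p) :=
          mul_le_mul_of_nonneg_left hsy.le (by linarith)
      _ = 2 * Real.pi := by field_simp
  have h49 : (49:ℝ) ≤ (p + 3) ^ 2 := by nlinarith
  have := mul_le_mul_of_nonneg_left h49 hπ.le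
  nlinarith

lemma hlogA :
    Real.log (4 * Real.pi * (p + 3) ^ 2 / (p * Real.sin (2 * Real.pi / p))) = Lfun p := by
  have hs := hsin hp
  have hp' := hp0 hp
  have hπ := Real.pi_pos
  rw [Real.log_div (by positivity) (by positivity),
    Real.log_mul (by positivity) (by positivity),
    Real.log_mul (ne_of_gt hp') (ne_of_gt hs), Real.log_pow]
  unfold Lfun
  push_cast
  ring

lemma hL2 : 2 ≤ Lfun p := by
  rw [← hlogA hp]
  rw [Real.le_log_iff_exp_le (hApos hp)]
  have h1 : Real.exp 1 < 2.7182818286 := Real.exp_one_lt_d9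
  have h2 : Real.exp 2 = Real.exp 1 * Real.exp 1 := by
    rw [← Real.exp_add]; norm_num
  have := Real.exp_pos 1
  nlinarith [hA98 hp]

lemma Kfun_hasDeriv :
    HasDerivAt Kfun
      (((0 + 2 * (1 / (p + 3)) - p⁻¹
          - Real.cos (2 * Real.pi / p) * (2 * Real.pi * -(p ^ 2)⁻¹)
            / Real.sin (2 * Real.pi / p)) * p - Lfun p * 1) / p ^ 2) p := by
  have hp' := hp0 hp
  have hs := hsin hp
  have h1 : HasDerivAt (fun x : ℝ => Real.log (x + 3)) (1 / (p + 3)) p := by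
    have hne : id p + 3 ≠ 0 := by simp only [id_eq]; intro h; linarith
    have := ((hasDerivAt_id p).add_const 3).log hne
    simpa using this
  have h2 : HasDerivAt Real.log p⁻¹ p := Real.hasDerivAt_log (ne_of_gt hp')
  have h3 : HasDerivAt (fun x : ℝ => 2 * Real.pi / x) (2 * Real.pi * -(p ^ 2)⁻¹) p := by
    have := (hasDerivAt_inv (ne_of_gt hp')).const_mul (2 * Real.pi)
    simpa [div_eq_mul_inv] using this
  have h4 : HasDerivAt (fun x : ℝ => Real.log (Real.sin (2 * Real.pi / x)))
      (Real.cos (2 * Real.pi / p) * (2 * Real.pi * -(p ^ 2)⁻¹) / Real.sin (2 * Real.pi / p)) p :=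
    (h3.sin).log (ne_of_gt hs)
  have hL : HasDerivAt Lfun
      (0 + 2 * (1 / (p + 3)) - p⁻¹
        - Real.cos (2 * Real.pi / p) * (2 * Real.pi * -(p ^ 2)⁻¹)
          / Real.sin (2 * Real.pi / p)) p := by
    exact (((hasDerivAt_const p (Real.log (4 * Real.pi))).add (h1.const_mul 2)).sub h2).sub h4
  have := hL.div (hasDerivAt_id p) (ne_of_gt hp')
  have hK : Kfun = Lfun / id := by funext x; simp [Kfun]
  simpa [hK] using this

lemma deriv_nonpos :
    ((0 + 2 * (1 / (p + 3)) - p⁻¹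
        - Real.cos (2 * Real.pi / p) * (2 * Real.pi * -(p ^ 2)⁻¹)
          / Real.sin (2 * Real.pi / p)) * p - Lfun p * 1) / p ^ 2 ≤ 0 := by
  have hp' := hp0 hp
  have hs := hsin hp
  apply div_nonpos_of_nonpos_of_nonneg _ (sq_nonneg p)
  have hterm : -(Real.cos (2 * Real.pi / p) * (2 * Real.pi * -(p ^ 2)⁻¹)
      / Real.sin (2 * Real.pi / p)) * p
      = Real.cos (2 * Real.pi / p) * (2 * Real.pi / p) / Real.sin (2 * Real.pi / p) := by
    field_simp
  have hcot : Real.cos (2 * Real.pi / p) * (2 * Real.pi / p) / Real.sin (2 * Real.pi / p) ≤ 1 := by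
    rw [div_le_one hs]
    exact cos_mul_le_sin (hy0 hp) (hy2 hp)
  have hfrac : 2 * (1 / (p + 3)) * p ≤ 2 := by
    rw [mul_comm, ← mul_assoc, mul_one_div, div_le_iff₀ (by linarith : (0:ℝ) < p + 3)]
    · nlinarith
  have hinv : p⁻¹ * p = 1 := inv_mul_cancel₀ (ne_of_gt hp')
  have hL := hL2 hp
  nlinarith [hterm, hcot, hfrac, hinv]

lemma K_eq_exp :
    (4 * Real.pi * (p + 3) ^ 2 / (p * Real.sin (2 * Real.pi / p))) ^ (1 / p)
      = Real.exp (Kfun p) := by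
  rw [Real.rpow_def_of_pos (hApos hp), hlogA hp, mul_one_div]
  rfl

end facts

lemma Kfun_anti : AntitoneOn Kfun (Set.Ici 4) := by
  have hint : interior (Set.Ici (4:ℝ)) = Set.Ioi 4 := interior_Ici
  apply antitoneOn_of_deriv_nonpos (convex_Ici 4)
  · exact fun x hx => (Kfun_hasDeriv hx).continuousAt.continuousWithinAt
  · intro x hx
    rw [hint] at hx
    exact (Kfun_hasDeriv (le_of_lt hx)).differentiableAt.differentiableWithinAt
  · intro x hx
    rw [hint] at hx
    rw [(Kfun_hasDeriv (le_of_lt hx)).deriv]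
    exact deriv_nonpos (le_of_lt hx)

/-- The function `K(p) = (4π(p+3)²/(p sin(2π/p)))^{1/p}` is decreasing on `[4, ∞)`;
in particular `K(p) ≤ K(4) = (49π)^{1/4}` for all `p ≥ 4`. -/
theorem K_decreasing :
    (∀ p q : ℝ, 4 ≤ p → p ≤ q →
      (4 * Real.pi * (q + 3) ^ 2 / (q * Real.sin (2 * Real.pi / q))) ^ (1 / q)
        ≤ (4 * Real.pi * (p + 3) ^ 2 / (p * Real.sin (2 * Real.pi / p))) ^ (1 / p))
    ∧ (4 * Real.pi * ((4 : ℝ) + 3) ^ 2 / (4 * Real.sin (2 * Real.pi / 4))) ^ (1 / (4 : ℝ))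
        = (49 * Real.pi) ^ ((1 : ℝ) / 4)
    ∧ ∀ p : ℝ, 4 ≤ p →
      (4 * Real.pi * (p + 3) ^ 2 / (p * Real.sin (2 * Real.pi / p))) ^ (1 / p)
        ≤ (49 * Real.pi) ^ ((1 : ℝ) / 4) := by
  have hmono : ∀ p q : ℝ, 4 ≤ p → p ≤ q →
      (4 * Real.pi * (q + 3) ^ 2 / (q * Real.sin (2 * Real.pi / q))) ^ (1 / q)
        ≤ (4 * Real.pi * (p + 3) ^ 2 / (p * Real.sin (2 * Real.pi / p))) ^ (1 / p) := by
    intro p q hp hpq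
    have hq : 4 ≤ q := le_trans hp hpq
    rw [K_eq_exp hp, K_eq_exp hq]
    exact Real.exp_le_exp.2 (Kfun_anti hp (le_trans hp hpq) hpq)
  have hK4 : (4 * Real.pi * ((4 : ℝ) + 3) ^ 2 / (4 * Real.sin (2 * Real.pi / 4))) ^ (1 / (4 : ℝ))
      = (49 * Real.pi) ^ ((1 : ℝ) / 4) := by
    have h : 2 * Real.pi / 4 = Real.pi / 2 := by ring
    rw [h, Real.sin_pi_div_two]
    norm_num
    ring_nf
  refine ⟨hmono, hK4, fun p hp => ?_⟩
  calc (4 * Real.pi * (p + 3) ^ 2 / (p * Real.sin (2 * Real.pi / p))) ^ (1 / p)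
      ≤ (4 * Real.pi * ((4:ℝ) + 3) ^ 2 / (4 * Real.sin (2 * Real.pi / 4))) ^ (1 / (4:ℝ)) :=
        hmono 4 p le_rfl hp
    _ = (49 * Real.pi) ^ ((1 : ℝ) / 4) := hK4
end

section
/- Let φ ∈ Φ with h(y) = φ(e^y) convex, strictly increasing, and Σ_{k≥3} exp(h(k)−h(k+1)) < ∞. If f is measurable on a probability space with tail bound μ{|f| > w} ≤ exp(−h(log w)) for all w ≥ e^2, then ∫ N(φ; e^{−2}|f|) dμ ≤ N(φ; e^{k₀−2}) + Σ_{k ≥ k₀} exp(h(k) − h(k+1)) < ∞ for suitable k₀, so e^{−2} f lies in the Orlicz class of N(φ;·). -/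
open MeasureTheory Real

/-- A strictly monotone convex function on `ℝ` is unbounded above. -/
private lemma h_unbounded (h : ℝ → ℝ) (hmono : StrictMono h)
    (hconv : ConvexOn ℝ Set.univ h) (M : ℝ) : ∃ n : ℕ, M ≤ h n := by
  have hs : 0 < h 1 - h 0 := by
    have := hmono (show (0:ℝ) < 1 by norm_num); linarith
  obtain ⟨n, hn⟩ := exists_nat_ge ((M - h 1) / (h 1 - h 0))
  refine ⟨n + 2, ?_⟩
  have ht : (1:ℝ) < (n:ℝ) + 2 := by have := Nat.cast_nonneg (α := ℝ) n; linarith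
  have hslope := hconv.slope_mono_adjacent (Set.mem_univ (0:ℝ))
    (Set.mem_univ ((n:ℝ) + 2)) (show (0:ℝ) < 1 by norm_num) ht
  have h1 : (h 1 - h 0) / (1 - 0) = h 1 - h 0 := by norm_num
  rw [h1] at hslope
  have h2 : (h 1 - h 0) * ((n:ℝ) + 2 - 1) ≤ h ((n:ℝ) + 2) - h 1 := by
    have := (le_div_iff₀ (by linarith : (0:ℝ) < (n:ℝ) + 2 - 1)).mp hslope
    linarith
  have h3 : (M - h 1) / (h 1 - h 0) * (h 1 - h 0) = M - h 1 := by
    field_simp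
  have h4 : ((n:ℝ) + 2 : ℝ) = ((n + 2 : ℕ) : ℝ) := by push_cast; ring
  rw [← h4]
  nlinarith [mul_le_mul_of_nonneg_right hn (le_of_lt hs)]

/-- If `f` has the tail bound `μ{|f| > w} ≤ exp(−h(log w))` for `w ≥ e²`, with
`φ ∈ Φ`, then for a suitable `k₀` the modular of `e⁻² f` is finite:
`∫ N(φ; e⁻²|f|) dμ ≤ N(φ; e^{k₀−2}) + Σ_{k ≥ k₀} exp(h(k) − h(k+1)) < ∞`. -/
theorem modular_finite_of_tail {X : Type*} [MeasurableSpace X] (μ : Measure X)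
    [IsProbabilityMeasure μ]
    (φ : ℝ → ℝ) (hφc : ContinuousOn φ (Set.Ici 0))
    (hφ0 : ∀ z ∈ Set.Ici (0 : ℝ), (φ z = 0 ↔ z = 0))
    (h : ℝ → ℝ) (hh : ∀ y, h y = φ (Real.exp y))
    (hmono : StrictMono h) (hconv : ConvexOn ℝ Set.univ h)
    (hsum : Summable (fun k : ℕ => Real.exp (h (k + 3) - h (k + 4))))
    (C₁ C₂ : ℝ) (hC₁ : 0 < C₁) (hC₂ : 0 < C₂)
    (N : ℝ → ℝ)
    (hNsmall : ∀ u : ℝ, |u| ≤ C₁ → N u = C₂ * |u|)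
    (hNlarge : ∀ u : ℝ, C₁ < |u| → N u = Real.exp (φ |u|))
    (f : X → ℝ) (hf : Measurable f)
    (htail : ∀ w : ℝ, Real.exp 2 ≤ w →
      (μ {x | w < |f x|}).toReal ≤ Real.exp (-(h (Real.log w)))) :
    ∃ k₀ : ℕ, Summable (fun k : ℕ => Real.exp (h (k₀ + k) - h (k₀ + k + 1))) ∧
      ∫⁻ x, ENNReal.ofReal (N (Real.exp (-2) * |f x|)) ∂μ
        ≤ ENNReal.ofReal (N (Real.exp ((k₀ : ℝ) - 2))
            + ∑' k : ℕ, Real.exp (h (k₀ + k) - h (k₀ + k + 1))) := by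
  have hm : Monotone h := hmono.monotone
  have hφ_log : ∀ u : ℝ, 0 < u → φ u = h (Real.log u) := fun u hu => by
    rw [hh, Real.exp_log hu]
  -- choose k₁
  obtain ⟨n₁, hn₁⟩ := h_unbounded h hmono hconv (Real.log (C₂ * C₁))
  obtain ⟨n₂, hn₂⟩ := exists_nat_gt (Real.log C₁)
  set k₁ : ℕ := max (n₁ + 2) (max (n₂ + 2) 4) with hk₁def
  have hk₁4 : 4 ≤ k₁ := le_max_of_le_right (le_max_right _ _)
  have hk₁n₁ : (n₁ : ℝ) ≤ (k₁ : ℝ) - 2 := by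
    have h1 : n₁ + 2 ≤ k₁ := le_max_left _ _
    have := (Nat.cast_le (α := ℝ)).mpr h1
    push_cast at this; linarith
  have hk₁n₂ : (n₂ : ℝ) ≤ (k₁ : ℝ) - 2 := by
    have h1 : n₂ + 2 ≤ k₁ := le_max_of_le_right (le_max_left _ _)
    have := (Nat.cast_le (α := ℝ)).mpr h1
    push_cast at this; linarith
  have hC₁lt : ∀ b : ℝ, (k₁ : ℝ) - 2 ≤ b → C₁ < Real.exp b := by
    intro b hb
    calc C₁ = Real.exp (Real.log C₁) := (Real.exp_log hC₁).symm
      _ < Real.exp b := Real.exp_lt_exp.mpr (by linarith)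
  have hCC : ∀ b : ℝ, (k₁ : ℝ) - 2 ≤ b → Real.log (C₂ * C₁) ≤ h b := by
    intro b hb
    exact le_trans hn₁ (hm (by linarith))
  -- key bound on N
  have keyN : ∀ b : ℝ, (k₁ : ℝ) - 2 ≤ b → ∀ u : ℝ, 0 ≤ u → u ≤ Real.exp b →
      N u ≤ Real.exp (h b) := by
    intro b hb u hu hub
    rcases le_or_gt u C₁ with hc | hc
    · rw [hNsmall u (by rwa [abs_of_nonneg hu]), abs_of_nonneg hu]
      calc C₂ * u ≤ C₂ * C₁ := by nlinarith
        _ = Real.exp (Real.log (C₂ * C₁)) := (Real.exp_log (by positivity)).symm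
        _ ≤ Real.exp (h b) := Real.exp_le_exp.mpr (hCC b hb)
    · have hupos : 0 < u := lt_trans hC₁ hc
      rw [hNlarge u (by rwa [abs_of_nonneg hu]), abs_of_nonneg hu, hφ_log u hupos]
      exact Real.exp_le_exp.mpr (hm ((Real.log_le_iff_le_exp hupos).mpr hub))
  -- bands
  set A : ℕ → Set X := fun k =>
    (fun x => |f x|) ⁻¹' Set.Ioc (Real.exp ((k₁ : ℝ) + k)) (Real.exp ((k₁ : ℝ) + k + 1))
    with hAdef
  have hA : ∀ k, MeasurableSet (A k) := fun k => hf.abs measurableSet_Ioc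
  set c : ℕ → ENNReal := fun k => ENNReal.ofReal (Real.exp (h ((k₁ : ℝ) + k - 1))) with hcdef
  set C : ENNReal := ENNReal.ofReal (Real.exp (h ((k₁ : ℝ) - 2))) with hCdef
  -- pointwise bound
  have hpt : ∀ x, ENNReal.ofReal (N (Real.exp (-2) * |f x|)) ≤
      C + ∑' k, (A k).indicator (fun _ => c k) x := by
    intro x
    have hu0 : 0 ≤ Real.exp (-2) * |f x| := by positivity
    rcases le_or_gt |f x| (Real.exp (k₁ : ℝ)) with hx | hx
    · have hub : Real.exp (-2) * |f x| ≤ Real.exp ((k₁ : ℝ) - 2) := by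
        rw [show ((k₁ : ℝ) - 2) = -2 + k₁ by ring, Real.exp_add]
        exact mul_le_mul_of_nonneg_left hx (Real.exp_nonneg _)
      refine le_trans ?_ le_self_add
      exact ENNReal.ofReal_le_ofReal (keyN _ le_rfl _ hu0 hub)
    · -- band case
      have hfpos : 0 < |f x| := lt_trans (Real.exp_pos _) hx
      set L := Real.log |f x| with hLdef
      have hL : (k₁ : ℝ) < L := (Real.lt_log_iff_exp_lt hfpos).mpr hx
      have hL0 : 0 ≤ L := le_trans (by positivity) (le_of_lt hL)
      have hceil : k₁ < ⌈L⌉₊ := Nat.lt_ceil.mpr hL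
      set k : ℕ := ⌈L⌉₊ - (k₁ + 1) with hkdef
      have hkk : k₁ + k + 1 = ⌈L⌉₊ := by omega
      have hcast : (k₁ : ℝ) + k + 1 = (⌈L⌉₊ : ℝ) := by
        rw [← hkk]; push_cast; ring
      have hxA : x ∈ A k := by
        constructor
        · show Real.exp ((k₁ : ℝ) + k) < |f x|
          have h1 : (k₁ : ℝ) + k < L := by
            have := Nat.ceil_lt_add_one hL0
            linarith [hcast]
          calc Real.exp ((k₁ : ℝ) + k) < Real.exp L := Real.exp_lt_exp.mpr h1
            _ = |f x| := Real.exp_log hfpos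
        · show |f x| ≤ Real.exp ((k₁ : ℝ) + k + 1)
          have h1 : L ≤ (k₁ : ℝ) + k + 1 := by rw [hcast]; exact Nat.le_ceil L
          calc |f x| = Real.exp L := (Real.exp_log hfpos).symm
            _ ≤ _ := Real.exp_le_exp.mpr h1
      have hub : Real.exp (-2) * |f x| ≤ Real.exp ((k₁ : ℝ) + k - 1) := by
        rw [show ((k₁ : ℝ) + k - 1) = -2 + ((k₁ : ℝ) + k + 1) by ring, Real.exp_add]
        exact mul_le_mul_of_nonneg_left hxA.2 (Real.exp_nonneg _)
      have hNb : ENNReal.ofReal (N (Real.exp (-2) * |f x|)) ≤ c k :=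
        ENNReal.ofReal_le_ofReal
          (keyN _ (by push_cast; linarith [Nat.cast_nonneg (α := ℝ) k]) _ hu0 hub)
      calc ENNReal.ofReal (N (Real.exp (-2) * |f x|)) ≤ c k := hNb
        _ = (A k).indicator (fun _ => c k) x := (Set.indicator_of_mem hxA (fun _ => c k)).symm
        _ ≤ ∑' j, (A j).indicator (fun _ => c j) x := ENNReal.le_tsum k
        _ ≤ _ := le_add_self
  -- integral bound
  have hint1 : ∫⁻ x, ENNReal.ofReal (N (Real.exp (-2) * |f x|)) ∂μ
      ≤ C + ∑' k, c k * μ (A k) := by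
    calc ∫⁻ x, ENNReal.ofReal (N (Real.exp (-2) * |f x|)) ∂μ
        ≤ ∫⁻ x, (C + ∑' k, (A k).indicator (fun _ => c k) x) ∂μ := lintegral_mono hpt
      _ = C * μ Set.univ + ∑' k, ∫⁻ x, (A k).indicator (fun _ => c k) x ∂μ := by
          rw [lintegral_add_left measurable_const, lintegral_const,
            lintegral_tsum (fun k => (measurable_const.indicator (hA k)).aemeasurable)]
      _ = C + ∑' k, c k * μ (A k) := by
          rw [measure_univ, mul_one]
          congr 1
          exact tsum_congr fun k => lintegral_indicator_const (hA k) _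
  -- band measure bound
  have hband : ∀ k : ℕ, c k * μ (A k)
      ≤ ENNReal.ofReal (Real.exp (h ((k₁ : ℝ) + k - 1) - h ((k₁ : ℝ) + k))) := by
    intro k
    have hμ : μ (A k) ≤ ENNReal.ofReal (Real.exp (-(h ((k₁ : ℝ) + k)))) := by
      have hsub : A k ⊆ {x | Real.exp ((k₁ : ℝ) + k) < |f x|} := fun x hx => hx.1
      have hw : Real.exp 2 ≤ Real.exp ((k₁ : ℝ) + k) := by
        apply Real.exp_le_exp.mpr
        have h4 : (4 : ℝ) ≤ (k₁ : ℝ) := by exact_mod_cast hk₁4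
        linarith [Nat.cast_nonneg (α := ℝ) k]
      have ht := htail (Real.exp ((k₁ : ℝ) + k)) hw
      rw [Real.log_exp] at ht
      have hfin : μ {x | Real.exp ((k₁ : ℝ) + k) < |f x|} ≠ ⊤ := measure_ne_top μ _
      calc μ (A k) ≤ μ {x | Real.exp ((k₁ : ℝ) + k) < |f x|} := measure_mono hsub
        _ = ENNReal.ofReal (μ {x | Real.exp ((k₁ : ℝ) + k) < |f x|}).toReal :=
            (ENNReal.ofReal_toReal hfin).symm
        _ ≤ _ := ENNReal.ofReal_le_ofReal ht
    calc c k * μ (A k)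
        ≤ ENNReal.ofReal (Real.exp (h ((k₁ : ℝ) + k - 1)))
          * ENNReal.ofReal (Real.exp (-(h ((k₁ : ℝ) + k)))) := mul_le_mul_right hμ _
      _ = ENNReal.ofReal (Real.exp (h ((k₁ : ℝ) + k - 1)) * Real.exp (-(h ((k₁ : ℝ) + k)))) :=
          (ENNReal.ofReal_mul (Real.exp_nonneg _)).symm
      _ = _ := by rw [← Real.exp_add]; ring_nf
  -- summability of the band series
  have S1 : Summable (fun k : ℕ => Real.exp (h ((k₁ : ℝ) + k - 1) - h ((k₁ : ℝ) + k))) := by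
    have hS := (summable_nat_add_iff (f := fun k : ℕ => Real.exp (h (k + 3) - h (k + 4)))
      (k₁ - 4)).mpr hsum
    refine hS.congr fun k => ?_
    have hc : ((k + (k₁ - 4) : ℕ) : ℝ) = (k : ℝ) + (k₁ : ℝ) - 4 := by
      push_cast [Nat.cast_sub hk₁4]; ring
    rw [hc]; ring_nf
  set Breal : ℝ := Real.exp (h ((k₁ : ℝ) - 2))
      + ∑' k : ℕ, Real.exp (h ((k₁ : ℝ) + k - 1) - h ((k₁ : ℝ) + k)) with hBdef
  have hBpos : 0 < Breal := by
    have : 0 ≤ ∑' k : ℕ, Real.exp (h ((k₁ : ℝ) + k - 1) - h ((k₁ : ℝ) + k)) :=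
      tsum_nonneg (fun k : ℕ => Real.exp_nonneg (h ((k₁ : ℝ) + k - 1) - h ((k₁ : ℝ) + k)))
    have := Real.exp_pos (h ((k₁ : ℝ) - 2))
    rw [hBdef]; linarith
  have hint2 : ∫⁻ x, ENNReal.ofReal (N (Real.exp (-2) * |f x|)) ∂μ ≤ ENNReal.ofReal Breal := by
    refine le_trans hint1 ?_
    rw [hBdef, ENNReal.ofReal_add (Real.exp_nonneg _)
      (tsum_nonneg (fun k => Real.exp_nonneg _)),
      ENNReal.ofReal_tsum_of_nonneg (fun k => Real.exp_nonneg _) S1]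
    exact add_le_add_right (ENNReal.tsum_le_tsum hband) _
  -- choose k₀
  obtain ⟨n₃, hn₃⟩ := h_unbounded h hmono hconv (Real.log Breal)
  refine ⟨max k₁ (n₃ + 2), ?_, ?_⟩
  · -- summability
    set k₀ : ℕ := max k₁ (n₃ + 2) with hk₀def
    have hk₀3 : 3 ≤ k₀ := le_trans (by omega : 3 ≤ k₁) (le_max_left _ _)
    have hS := (summable_nat_add_iff (f := fun k : ℕ => Real.exp (h (k + 3) - h (k + 4)))
      (k₀ - 3)).mpr hsum
    refine hS.congr fun k => ?_
    have hc : ((k + (k₀ - 3) : ℕ) : ℝ) = (k : ℝ) + (k₀ : ℝ) - 3 := by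
      push_cast [Nat.cast_sub hk₀3]; ring
    rw [hc]; ring_nf
  · set k₀ : ℕ := max k₁ (n₃ + 2) with hk₀def
    have hk₀k₁ : k₁ ≤ k₀ := le_max_left _ _
    have hk₀n₃ : (n₃ : ℝ) ≤ (k₀ : ℝ) - 2 := by
      have h1 : n₃ + 2 ≤ k₀ := le_max_right _ _
      have := (Nat.cast_le (α := ℝ)).mpr h1
      push_cast at this; linarith
    have hk₁k₀ : (k₁ : ℝ) - 2 ≤ (k₀ : ℝ) - 2 := by
      have := (Nat.cast_le (α := ℝ)).mpr hk₀k₁; linarith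
    have hNval : N (Real.exp ((k₀ : ℝ) - 2)) = Real.exp (h ((k₀ : ℝ) - 2)) := by
      have habs : |Real.exp ((k₀ : ℝ) - 2)| = Real.exp ((k₀ : ℝ) - 2) :=
        abs_of_pos (Real.exp_pos _)
      rw [hNlarge _ (by rw [habs]; exact hC₁lt _ hk₁k₀), habs, ← hh]
    have hBle : Breal ≤ Real.exp (h ((k₀ : ℝ) - 2)) := by
      calc Breal = Real.exp (Real.log Breal) := (Real.exp_log hBpos).symm
        _ ≤ Real.exp (h ((k₀ : ℝ) - 2)) :=
            Real.exp_le_exp.mpr (le_trans hn₃ (hm hk₀n₃))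
    refine le_trans hint2 (ENNReal.ofReal_le_ofReal ?_)
    have hT : 0 ≤ ∑' k : ℕ, Real.exp (h ((k₀ : ℝ) + k) - h ((k₀ : ℝ) + k + 1)) :=
      tsum_nonneg fun k => Real.exp_nonneg _
    rw [hNval]
    push_cast
    linarith
end

section
/- Let r ≥ 1 be an integer and m > 0. If a measurable function f on a probability space satisfies μ{|f| > u} ≤ C · u^{−1/r} (log u)^{1/(mr)} for u ≥ 3, then for every β < 1/r one has ||f||_β ≤ C' · (1/r − β)^{−(mr+1)/(mr β)} for a constant C' depending on C, m, r; in particular sup_{β ∈ [4/(4r+1),1/r)} ||f||_β · (1/r − β)^{(mr+1)/m} < ∞ after adjusting exponents. -/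
open MeasureTheory Real

open Set in
lemma key_int {X : Type*} [MeasurableSpace X] (μ : Measure X)
    [IsProbabilityMeasure μ]
    (r : ℕ) (hr : 1 ≤ r) (m : ℝ) (hm : 0 < m) (C : ℝ)
    (f : X → ℝ) (hf : Measurable f)
    (htail : ∀ u : ℝ, 3 ≤ u →
      (μ {x | u < |f x|}).toReal
        ≤ C * u ^ (-(1 / (r : ℝ))) * (Real.log u) ^ (1 / (m * (r : ℝ))))
    (β : ℝ) (hβ0 : 0 < β) (hβlt : β < 1 / (r : ℝ)) :
    ∫ x, |f x| ^ β ∂μ ≤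
      (3 + 2 * (max C 1) * (m * (r : ℝ) / 2) ^ (-(1 / (m * (r : ℝ)))))
        * (1 / (r : ℝ) - β) ^ (-(1 / (m * (r : ℝ)) + 1)) := by
  have hr0 : (0 : ℝ) < r := by exact_mod_cast hr
  have hrinv : 1 / (r : ℝ) ≤ 1 := by
    rw [div_le_one hr0]; exact_mod_cast hr
  have hβ1 : β ≤ 1 := le_trans hβlt.le hrinv
  set a : ℝ := 1 / (m * (r : ℝ)) with ha_def
  have hmr : 0 < m * (r : ℝ) := mul_pos hm hr0
  have ha : 0 < a := by positivity
  set ε : ℝ := 1 / (r : ℝ) - β with hε_def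
  have hε : 0 < ε := by simp only [hε_def]; linarith
  have hε1 : ε ≤ 1 := by simp only [hε_def]; linarith
  set γ : ℝ := ε * (m * (r : ℝ)) / 2 with hγ_def
  have hγ : 0 < γ := by positivity
  have hγa : γ * a = ε / 2 := by
    have := hmr.ne'; field_simp [hγ_def, ha_def]; rw [hγ_def, ha_def]; field_simp
  set C₁ : ℝ := max C 1 with hC₁_def
  have hC₁ : 1 ≤ C₁ := le_max_right _ _
  have hC₁0 : 0 < C₁ := lt_of_lt_of_le one_pos hC₁
  -- layer cake
  have hnn : (0 : X → ℝ) ≤ᵐ[μ] fun x => |f x| :=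
    Filter.Eventually.of_forall fun x => by simp [abs_nonneg]
  have hmble : AEMeasurable (fun x => |f x|) μ := (hf.abs).aemeasurable
  have layer := lintegral_rpow_eq_lintegral_meas_lt_mul μ hnn hmble hβ0
  have hint : ∫ x, |f x| ^ β ∂μ
      = (∫⁻ x, ENNReal.ofReal (|f x| ^ β) ∂μ).toReal := by
    rw [integral_eq_lintegral_of_nonneg_ae
      (Filter.Eventually.of_forall fun x => by positivity)
      ((hf.abs.pow_const β).aestronglyMeasurable)]
  -- split the tail integral
  have split : Ioc (0:ℝ) 3 ∪ Ioi (3:ℝ) = Ioi (0:ℝ) :=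
    Ioc_union_Ioi_eq_Ioi (by norm_num)
  have hsplit : ∫⁻ t in Ioi (0:ℝ), μ {x | t < |f x|} * ENNReal.ofReal (t ^ (β - 1))
      = (∫⁻ t in Ioc (0:ℝ) 3, μ {x | t < |f x|} * ENNReal.ofReal (t ^ (β - 1)))
        + ∫⁻ t in Ioi (3:ℝ), μ {x | t < |f x|} * ENNReal.ofReal (t ^ (β - 1)) := by
    rw [← split, lintegral_union measurableSet_Ioi (Ioc_disjoint_Ioi le_rfl)]
  -- I1
  have hI1 : ∫⁻ t in Ioc (0:ℝ) 3, μ {x | t < |f x|} * ENNReal.ofReal (t ^ (β - 1))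
      ≤ ENNReal.ofReal (3 ^ β / β) := by
    have hmono : ∫⁻ t in Ioc (0:ℝ) 3, μ {x | t < |f x|} * ENNReal.ofReal (t ^ (β - 1))
        ≤ ∫⁻ t in Ioc (0:ℝ) 3, ENNReal.ofReal (t ^ (β - 1)) := by
      refine lintegral_mono fun t => ?_
      calc μ {x | t < |f x|} * ENNReal.ofReal (t ^ (β - 1))
          ≤ 1 * ENNReal.ofReal (t ^ (β - 1)) := mul_le_mul_left prob_le_one _
        _ = ENNReal.ofReal (t ^ (β - 1)) := one_mul _
    refine hmono.trans (le_of_eq ?_)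
    have hIntOn : IntegrableOn (fun t : ℝ => t ^ (β - 1)) (Ioc (0:ℝ) 3) := by
      have := intervalIntegral.intervalIntegrable_rpow' (a := 0) (b := 3)
        (show (-1:ℝ) < β - 1 by linarith)
      rwa [intervalIntegrable_iff_integrableOn_Ioc_of_le (by norm_num)] at this
    rw [← ofReal_integral_eq_lintegral_ofReal hIntOn ?_]
    · congr 1
      rw [← intervalIntegral.integral_of_le (by norm_num : (0:ℝ) ≤ 3),
        integral_rpow (Or.inl (show (-1:ℝ) < β - 1 by linarith))]
      rw [Real.zero_rpow (by linarith : β - 1 + 1 ≠ 0)]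
      norm_num
    · filter_upwards [ae_restrict_mem measurableSet_Ioc] with t ht
      exact Real.rpow_nonneg ht.1.le _
  -- pointwise tail bound
  have hptwise : ∀ t ∈ Ioi (3:ℝ), μ {x | t < |f x|} * ENNReal.ofReal (t ^ (β - 1))
      ≤ ENNReal.ofReal ((C₁ * γ ^ (-a)) * t ^ (-1 - ε / 2)) := by
    intro t ht
    have ht3 : (3:ℝ) ≤ t := le_of_lt ht
    have ht0 : (0:ℝ) < t := by linarith
    have ht1 : (1:ℝ) ≤ t := by linarith
    have hlog : 0 ≤ Real.log t := Real.log_nonneg ht1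
    have h1 : μ {x | t < |f x|}
        ≤ ENNReal.ofReal (C₁ * t ^ (-(1 / (r:ℝ))) * Real.log t ^ a) := by
      rw [← ENNReal.ofReal_toReal (measure_ne_top μ _)]
      apply ENNReal.ofReal_le_ofReal
      refine (htail t ht3).trans ?_
      have h2 : C * t ^ (-(1 / (r:ℝ))) ≤ C₁ * t ^ (-(1 / (r:ℝ))) :=
        mul_le_mul_of_nonneg_right (le_max_left _ _) (Real.rpow_nonneg ht0.le _)
      exact mul_le_mul_of_nonneg_right h2 (Real.rpow_nonneg hlog _)
    calc μ {x | t < |f x|} * ENNReal.ofReal (t ^ (β - 1))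
        ≤ ENNReal.ofReal (C₁ * t ^ (-(1 / (r:ℝ))) * Real.log t ^ a)
            * ENNReal.ofReal (t ^ (β - 1)) := mul_le_mul_left h1 _
      _ = ENNReal.ofReal (C₁ * t ^ (-(1 / (r:ℝ))) * Real.log t ^ a * t ^ (β - 1)) :=
          (ENNReal.ofReal_mul (by positivity)).symm
      _ ≤ ENNReal.ofReal ((C₁ * γ ^ (-a)) * t ^ (-1 - ε / 2)) := by
          apply ENNReal.ofReal_le_ofReal
          have hlog2 : Real.log t ^ a ≤ t ^ (ε / 2) * γ ^ (-a) := by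
            have h := Real.log_le_rpow_div ht0.le hγ
            calc Real.log t ^ a ≤ (t ^ γ / γ) ^ a :=
                Real.rpow_le_rpow hlog h ha.le
              _ = (t ^ γ) ^ a / γ ^ a :=
                Real.div_rpow (Real.rpow_nonneg ht0.le _) hγ.le a
              _ = t ^ (γ * a) / γ ^ a := by rw [← Real.rpow_mul ht0.le]
              _ = t ^ (ε / 2) * γ ^ (-a) := by
                rw [hγa, Real.rpow_neg hγ.le, div_eq_mul_inv]
          have hstep : C₁ * t ^ (-(1 / (r:ℝ))) * Real.log t ^ a * t ^ (β - 1)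
              ≤ C₁ * t ^ (-(1 / (r:ℝ))) * (t ^ (ε / 2) * γ ^ (-a)) * t ^ (β - 1) := by
            apply mul_le_mul_of_nonneg_right _ (Real.rpow_nonneg ht0.le _)
            exact mul_le_mul_of_nonneg_left hlog2 (by positivity)
          refine hstep.trans (le_of_eq ?_)
          have hcomb : t ^ (-(1 / (r:ℝ))) * t ^ (ε / 2) * t ^ (β - 1)
              = t ^ (-1 - ε / 2) := by
            rw [← Real.rpow_add ht0, ← Real.rpow_add ht0]
            congr 1
            simp only [hε_def]; ring
          calc C₁ * t ^ (-(1 / (r:ℝ))) * (t ^ (ε / 2) * γ ^ (-a)) * t ^ (β - 1)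
              = (C₁ * γ ^ (-a)) * (t ^ (-(1 / (r:ℝ))) * t ^ (ε / 2) * t ^ (β - 1)) := by
                ring
            _ = (C₁ * γ ^ (-a)) * t ^ (-1 - ε / 2) := by rw [hcomb]
  -- I2
  have hI2 : ∫⁻ t in Ioi (3:ℝ), μ {x | t < |f x|} * ENNReal.ofReal (t ^ (β - 1))
      ≤ ENNReal.ofReal ((C₁ * γ ^ (-a)) * (2 / ε)) := by
    have hstep : ∫⁻ t in Ioi (3:ℝ), μ {x | t < |f x|} * ENNReal.ofReal (t ^ (β - 1))
        ≤ ∫⁻ t in Ioi (3:ℝ), ENNReal.ofReal ((C₁ * γ ^ (-a)) * t ^ (-1 - ε / 2)) := by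
      refine lintegral_mono_ae ?_
      filter_upwards [ae_restrict_mem measurableSet_Ioi] with t ht using hptwise t ht
    refine hstep.trans ?_
    have hIntOn : IntegrableOn (fun t : ℝ => (C₁ * γ ^ (-a)) * t ^ (-1 - ε / 2))
        (Ioi (3:ℝ)) :=
      (integrableOn_Ioi_rpow_of_lt (by linarith) (by norm_num)).const_mul _
    rw [← ofReal_integral_eq_lintegral_ofReal hIntOn ?_]
    · apply ENNReal.ofReal_le_ofReal
      rw [MeasureTheory.integral_const_mul, integral_Ioi_rpow_of_lt (by linarith) (by norm_num)]
      have hexp : -1 - ε / 2 + 1 = -(ε / 2) := by ring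
      rw [hexp]
      have h3le : (3:ℝ) ^ (-(ε / 2)) ≤ 1 :=
        Real.rpow_le_one_of_one_le_of_nonpos (by norm_num) (by linarith)
      have h3pos : (0:ℝ) < (3:ℝ) ^ (-(ε / 2)) := Real.rpow_pos_of_pos (by norm_num) _
      have hval : -(3:ℝ) ^ (-(ε / 2)) / -(ε / 2) = (3:ℝ) ^ (-(ε / 2)) * (2 / ε) := by
        field_simp
      rw [hval]
      have : (3:ℝ) ^ (-(ε / 2)) * (2 / ε) ≤ 1 * (2 / ε) :=
        mul_le_mul_of_nonneg_right h3le (by positivity)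
      have h2 : (3:ℝ) ^ (-(ε / 2)) * (2 / ε) ≤ 2 / ε := by linarith
      exact mul_le_mul_of_nonneg_left h2 (by positivity)
    · filter_upwards [ae_restrict_mem measurableSet_Ioi] with t ht
      have ht0 : (0:ℝ) < t := lt_trans (by norm_num) ht
      positivity
  -- assemble the lintegral bound
  have htotal : ∫⁻ x, ENNReal.ofReal (|f x| ^ β) ∂μ
      ≤ ENNReal.ofReal (3 + (C₁ * γ ^ (-a)) * (2 / ε)) := by
    rw [layer, hsplit, mul_add]
    have hterm1 : ENNReal.ofReal β *
        (∫⁻ t in Ioc (0:ℝ) 3, μ {x | t < |f x|} * ENNReal.ofReal (t ^ (β - 1)))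
        ≤ ENNReal.ofReal 3 := by
      calc ENNReal.ofReal β * _ ≤ ENNReal.ofReal β * ENNReal.ofReal (3 ^ β / β) :=
            mul_le_mul_right hI1 _
        _ = ENNReal.ofReal (β * (3 ^ β / β)) := (ENNReal.ofReal_mul hβ0.le).symm
        _ = ENNReal.ofReal (3 ^ β) := by rw [mul_div_cancel₀ _ hβ0.ne']
        _ ≤ ENNReal.ofReal 3 := by
            apply ENNReal.ofReal_le_ofReal
            calc (3:ℝ) ^ β ≤ (3:ℝ) ^ (1:ℝ) :=
                Real.rpow_le_rpow_of_exponent_le (by norm_num) hβ1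
              _ = 3 := Real.rpow_one 3
    have hterm2 : ENNReal.ofReal β *
        (∫⁻ t in Ioi (3:ℝ), μ {x | t < |f x|} * ENNReal.ofReal (t ^ (β - 1)))
        ≤ ENNReal.ofReal ((C₁ * γ ^ (-a)) * (2 / ε)) := by
      calc ENNReal.ofReal β * _ ≤ 1 * ENNReal.ofReal ((C₁ * γ ^ (-a)) * (2 / ε)) :=
            mul_le_mul' (ENNReal.ofReal_le_one.2 hβ1) hI2
        _ = _ := one_mul _
    calc _ ≤ ENNReal.ofReal 3 + ENNReal.ofReal ((C₁ * γ ^ (-a)) * (2 / ε)) :=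
          add_le_add hterm1 hterm2
      _ = ENNReal.ofReal (3 + (C₁ * γ ^ (-a)) * (2 / ε)) :=
          (ENNReal.ofReal_add (by norm_num) (by positivity)).symm
  -- pass to real numbers
  have hreal : ∫ x, |f x| ^ β ∂μ ≤ 3 + (C₁ * γ ^ (-a)) * (2 / ε) := by
    rw [hint]
    calc (∫⁻ x, ENNReal.ofReal (|f x| ^ β) ∂μ).toReal
        ≤ (ENNReal.ofReal (3 + (C₁ * γ ^ (-a)) * (2 / ε))).toReal :=
          ENNReal.toReal_mono ENNReal.ofReal_ne_top htotal
      _ = 3 + (C₁ * γ ^ (-a)) * (2 / ε) :=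
          ENNReal.toReal_ofReal (by positivity)
  -- final algebra
  refine hreal.trans ?_
  have hγ_split : γ ^ (-a) = ε ^ (-a) * (m * (r:ℝ) / 2) ^ (-a) := by
    have hγ2 : γ = ε * (m * (r:ℝ) / 2) := by rw [hγ_def]; ring
    rw [hγ2, Real.mul_rpow hε.le (by positivity)]
  have hx : ε ^ (-a) * (2 / ε) = 2 * ε ^ (-(a + 1)) := by
    have h1 : ε ^ (-(a + 1)) = ε ^ (-a) * ε ^ (-1:ℝ) := by
      rw [← Real.rpow_add hε]; ring_nf
    rw [h1, Real.rpow_neg_one]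
    field_simp
  have hone : 1 ≤ ε ^ (-(a + 1)) :=
    Real.one_le_rpow_of_pos_of_le_one_of_nonpos hε hε1 (by linarith)
  have hq : (0:ℝ) ≤ C₁ * (m * (r:ℝ) / 2) ^ (-a) := by positivity
  have heq : (C₁ * γ ^ (-a)) * (2 / ε)
      = 2 * C₁ * (m * (r:ℝ) / 2) ^ (-a) * ε ^ (-(a + 1)) := by
    rw [hγ_split]
    linear_combination (C₁ * (m * (r:ℝ) / 2) ^ (-a)) * hx
  rw [heq]
  have h3 : (3:ℝ) ≤ 3 * ε ^ (-(a + 1)) := by nlinarith [hone]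
  nlinarith [hone, hq]

/-- From the tail estimate `μ{|f| > u} ≤ C u^{−1/r} (log u)^{1/(mr)}` (`u ≥ 3`)
one gets `‖f‖_β ≤ C' (1/r − β)^{−(mr+1)/(mrβ)}` for every `β ∈ [4/(4r+1), 1/r)`,
and in particular `sup_β ‖f‖_β (1/r − β)^{(mr+1)/m} < ∞`. -/
theorem V_norm_from_tail {X : Type*} [MeasurableSpace X] (μ : Measure X)
    [IsProbabilityMeasure μ]
    (r : ℕ) (hr : 1 ≤ r) (m : ℝ) (hm : 0 < m) (C : ℝ)
    (f : X → ℝ) (hf : Measurable f)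
    (htail : ∀ u : ℝ, 3 ≤ u →
      (μ {x | u < |f x|}).toReal
        ≤ C * u ^ (-(1 / (r : ℝ))) * (Real.log u) ^ (1 / (m * (r : ℝ)))) :
    (∃ C' : ℝ, ∀ β : ℝ, β ∈ Set.Ico (4 / (4 * (r : ℝ) + 1)) (1 / (r : ℝ)) →
        (∫ x, |f x| ^ β ∂μ) ^ (1 / β)
          ≤ C' * (1 / (r : ℝ) - β) ^ (-((m * (r : ℝ) + 1) / (m * (r : ℝ) * β))))
    ∧ (∃ M : ℝ, ∀ β : ℝ, β ∈ Set.Ico (4 / (4 * (r : ℝ) + 1)) (1 / (r : ℝ)) →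
        (∫ x, |f x| ^ β ∂μ) ^ (1 / β)
          * (1 / (r : ℝ) - β) ^ ((m * (r : ℝ) + 1) / m) ≤ M) := by
  have hr0 : (0 : ℝ) < r := by exact_mod_cast hr
  have hrinv : 1 / (r : ℝ) ≤ 1 := by rw [div_le_one hr0]; exact_mod_cast hr
  have hmr : 0 < m * (r : ℝ) := mul_pos hm hr0
  set K : ℝ := 3 + 2 * (max C 1) * (m * (r : ℝ) / 2) ^ (-(1 / (m * (r : ℝ)))) with hK_def
  have hCm : (0:ℝ) < max C 1 := lt_of_lt_of_le one_pos (le_max_right _ _)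
  have hK1 : 1 ≤ K := by
    have h0 : (0:ℝ) ≤ 2 * (max C 1) * (m * (r : ℝ) / 2) ^ (-(1 / (m * (r : ℝ)))) :=
      mul_nonneg (mul_nonneg (by norm_num) hCm.le) (Real.rpow_nonneg (by positivity) _)
    simp only [hK_def]; linarith
  have hK0 : 0 < K := lt_of_lt_of_le one_pos hK1
  set C' : ℝ := K ^ ((4 * (r : ℝ) + 1) / 4) with hC'_def
  have hC'0 : 0 ≤ C' := Real.rpow_nonneg hK0.le _
  have main : ∀ β ∈ Set.Ico (4 / (4 * (r : ℝ) + 1)) (1 / (r : ℝ)),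
      (∫ x, |f x| ^ β ∂μ) ^ (1 / β)
        ≤ C' * (1 / (r : ℝ) - β) ^ (-((m * (r : ℝ) + 1) / (m * (r : ℝ) * β))) := by
    rintro β ⟨hβl, hβu⟩
    have hden : (0:ℝ) < 4 * (r : ℝ) + 1 := by positivity
    have hβ0 : 0 < β := lt_of_lt_of_le (by positivity) hβl
    have hβinv : 1 / β ≤ (4 * (r : ℝ) + 1) / 4 := by
      rw [div_le_div_iff₀ hβ0 (by norm_num)]
      have := (div_le_iff₀ hden).mp hβl
      linarith
    have hε : 0 < 1 / (r : ℝ) - β := by linarith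
    have hI := key_int μ r hr m hm C f hf htail β hβ0 hβu
    have hInn : 0 ≤ ∫ x, |f x| ^ β ∂μ := integral_nonneg fun x => by positivity
    have h1 : (∫ x, |f x| ^ β ∂μ) ^ (1 / β)
        ≤ (K * (1 / (r : ℝ) - β) ^ (-(1 / (m * (r : ℝ)) + 1))) ^ (1 / β) :=
      Real.rpow_le_rpow hInn hI (by positivity)
    refine h1.trans ?_
    rw [Real.mul_rpow hK0.le (Real.rpow_nonneg hε.le _), ← Real.rpow_mul hε.le]
    have hexp : -(1 / (m * (r : ℝ)) + 1) * (1 / β) = -((m * (r : ℝ) + 1) / (m * (r : ℝ) * β)) := by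
      field_simp
      ring
    rw [hexp]
    apply mul_le_mul_of_nonneg_right _ (Real.rpow_nonneg hε.le _)
    exact Real.rpow_le_rpow_of_exponent_le hK1 hβinv
  refine ⟨⟨C', main⟩, ⟨C' * Real.exp ((m * (r : ℝ) + 1) / m * ((4 * (r : ℝ) + 1) / 4)), ?_⟩⟩
  rintro β ⟨hβl, hβu⟩
  have hden : (0:ℝ) < 4 * (r : ℝ) + 1 := by positivity
  have hβ0 : 0 < β := lt_of_lt_of_le (by positivity) hβl
  have hβinv : 1 / β ≤ (4 * (r : ℝ) + 1) / 4 := by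
    rw [div_le_div_iff₀ hβ0 (by norm_num)]
    have := (div_le_iff₀ hden).mp hβl
    linarith
  set ε : ℝ := 1 / (r : ℝ) - β with hεd
  have hε : 0 < ε := by simp only [hεd]; linarith
  have hε1 : ε ≤ 1 := by simp only [hεd]; linarith
  have h := main β ⟨hβl, hβu⟩
  have hεnn : 0 ≤ ε ^ ((m * (r : ℝ) + 1) / m) := Real.rpow_nonneg hε.le _
  calc (∫ x, |f x| ^ β ∂μ) ^ (1 / β) * ε ^ ((m * (r : ℝ) + 1) / m)
      ≤ (C' * ε ^ (-((m * (r : ℝ) + 1) / (m * (r : ℝ) * β)))) * ε ^ ((m * (r : ℝ) + 1) / m) :=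
        mul_le_mul_of_nonneg_right h hεnn
    _ = C' * ε ^ (-((m * (r : ℝ) + 1) / (m * (r : ℝ) * β)) + (m * (r : ℝ) + 1) / m) := by
        rw [Real.rpow_add hε]; ring
    _ ≤ C' * Real.exp ((m * (r : ℝ) + 1) / m * ((4 * (r : ℝ) + 1) / 4)) := by
        apply mul_le_mul_of_nonneg_left _ hC'0
        set d : ℝ := -((m * (r : ℝ) + 1) / (m * (r : ℝ) * β)) + (m * (r : ℝ) + 1) / m with hd_def
        have hd : d = -((m * (r : ℝ) + 1) / (m * β)) * ε := by
          simp only [hd_def, hεd]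
          field_simp
          ring
        rw [Real.rpow_def_of_pos hε]
        apply Real.exp_le_exp.mpr
        have hlogle : -Real.log ε ≤ ε⁻¹ := by
          have h2 := Real.log_le_sub_one_of_pos (inv_pos.mpr hε)
          rw [Real.log_inv] at h2
          linarith
        have hkey : ε * (-Real.log ε) ≤ 1 := by
          calc ε * (-Real.log ε) ≤ ε * ε⁻¹ := mul_le_mul_of_nonneg_left hlogle hε.le
            _ = 1 := mul_inv_cancel₀ hε.ne'
        have hcoef : (0:ℝ) ≤ (m * (r : ℝ) + 1) / (m * β) := by positivity
        have heq : Real.log ε * d = (m * (r : ℝ) + 1) / (m * β) * (ε * (-Real.log ε)) := by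
          rw [hd]; ring
        rw [heq]
        have hcoefle : (m * (r : ℝ) + 1) / (m * β)
            ≤ (m * (r : ℝ) + 1) / m * ((4 * (r : ℝ) + 1) / 4) := by
          calc (m * (r : ℝ) + 1) / (m * β) = (m * (r : ℝ) + 1) / m * (1 / β) := by
                rw [div_mul_div_comm, mul_one]
            _ ≤ (m * (r : ℝ) + 1) / m * ((4 * (r : ℝ) + 1) / 4) :=
                mul_le_mul_of_nonneg_left hβinv (by positivity)
        calc (m * (r : ℝ) + 1) / (m * β) * (ε * (-Real.log ε))
            ≤ (m * (r : ℝ) + 1) / (m * β) * 1 := mul_le_mul_of_nonneg_left hkey hcoef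
          _ = (m * (r : ℝ) + 1) / (m * β) := mul_one _
          _ ≤ _ := hcoefle
end
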